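/- Let m ≥ 2 and let n_1, …, n_m be m distinct positive integers. Define f_r(n) = (n+r-2)!/((r-1)!(n-1)!) for r ≥ 1. Then the determinant of the m×m matrix whose (i,j)-entry is f_j(n_i) equals (∏_{1≤i<j≤m} (n_j - n_i)) / (∏_{i=1}^{m-1} i!). -/

import Mathlib

open Finset

/-- Determinant of the matrix with entries `f_j(n_i) = C(n_i + j - 2, j - 1)`. -/
theorem det_f_matrix (m : ℕ) (hm : 2 ≤ m) (n : Fin m → ℕ)
    (hpos : ∀ i, 1 ≤ n i) (hinj : Function.Injective n) :
    Matrix.det (Matrix.of fun i j : Fin m =>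
        (Nat.choose (n i + (j : ℕ) + 1 - 2) ((j : ℕ) + 1 - 1) : ℚ)) =
      (∏ j : Fin m, ∏ i ∈ Finset.Iio j, ((n j : ℚ) - (n i : ℚ))) /
        (∏ i ∈ Finset.Icc 1 (m - 1), (Nat.factorial i : ℚ)) := by
  classical
  have key : ∀ i j : Fin m,
      (Nat.choose (n i + (j : ℕ) + 1 - 2) ((j : ℕ) + 1 - 1) : ℚ) =
      ((j : ℕ).factorial : ℚ)⁻¹ * (Polynomial.eval ((n i : ℚ)) (ascPochhammer ℚ (j : ℕ))) := by
    intro i j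
    have h1 : n i + (j : ℕ) + 1 - 2 = n i + (j : ℕ) - 1 := by omega
    have h2 : (j : ℕ) + 1 - 1 = (j : ℕ) := by omega
    rw [h1, h2]
    have h3 : Polynomial.eval ((n i : ℚ)) (ascPochhammer ℚ (j : ℕ))
        = ((Nat.ascFactorial (n i) (j : ℕ) : ℚ)) := by
      rw [← ascPochhammer_nat_eq_ascFactorial, ← ascPochhammer_eval_cast]
    rw [h3, Nat.ascFactorial_eq_factorial_mul_choose']
    have : ((j : ℕ).factorial : ℚ) ≠ 0 := Nat.cast_ne_zero.mpr (Nat.factorial_ne_zero _)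
    push_cast
    field_simp
  have hA : (Matrix.of fun i j : Fin m =>
      (Nat.choose (n i + (j : ℕ) + 1 - 2) ((j : ℕ) + 1 - 1) : ℚ)) =
      Matrix.of fun i j : Fin m => (fun j : Fin m => ((j : ℕ).factorial : ℚ)⁻¹) j *
        (Matrix.of fun i j : Fin m =>
          Polynomial.eval ((n i : ℚ)) (ascPochhammer ℚ (j : ℕ))) i j := by
    ext i j; simpa using key i j
  rw [hA, Matrix.det_mul_row]
  rw [← Matrix.det_eval_matrixOfPolynomials_eq_det_vandermonde (fun i => ((n i : ℚ)))
      (fun j => ascPochhammer ℚ (j : ℕ))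
      (fun j => ascPochhammer_natDegree ℚ (j : ℕ))
      (fun j => monic_ascPochhammer ℚ (j : ℕ))]
  rw [Matrix.det_vandermonde]
  have hswap : (∏ i : Fin m, ∏ j ∈ Finset.Ioi i, ((n j : ℚ) - (n i : ℚ)))
      = ∏ j : Fin m, ∏ i ∈ Finset.Iio j, ((n j : ℚ) - (n i : ℚ)) := by
    rw [Finset.prod_sigma', Finset.prod_sigma']
    apply Finset.prod_nbij' (fun x => ⟨x.2, x.1⟩) (fun x => ⟨x.2, x.1⟩) <;>
      simp [Finset.mem_sigma, Finset.mem_Ioi, Finset.mem_Iio]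
  rw [hswap]
  have hfact : (∏ j : Fin m, ((j : ℕ).factorial : ℚ)⁻¹)
      = (∏ i ∈ Finset.Icc 1 (m - 1), ((i.factorial : ℚ)))⁻¹ := by
    rw [← Finset.prod_inv_distrib]
    rw [Fin.prod_univ_eq_prod_range (fun j => ((Nat.factorial j : ℚ))⁻¹)]
    have : Finset.range m = insert 0 (Finset.Icc 1 (m - 1)) := by
      ext x; simp [Finset.mem_range, Finset.mem_Icc]; omega
    rw [this, Finset.prod_insert (by simp)]
    simp
  rw [hfact]
  ring
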